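/- If w ∈ F(A,B) is a primitive element whose reduced form contains only positive powers of A and B (a positive word), and w involves both generators, then in the syllable decomposition w = A^{m₁}B^{n₁}⋯A^{m_j}B^{n_j} either all m_i = 1 or all n_i = 1. -/

import Mathlib

abbrev F2 := FreeGroup Bool

def A : F2 := FreeGroup.of true

def B : F2 := FreeGroup.of false

/-- `(x, y)` is a basis (free generating pair) of the free group `F2 = F(A,B)`. -/
def IsBasis (x y : F2) : Prop := ∃ e : F2 ≃* F2, e A = x ∧ e B = y

/-- `w` is primitive: it is part of some basis of `F2`. -/
def IsPrimitive (w : F2) : Prop := ∃ x y : F2, IsBasis x y ∧ (w = x ∨ w = y)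
noncomputable section Aux

/-- The affine group over `ℂ`: pairs (u, t) acting as z ↦ u z + t. -/
@[ext] structure Aff : Type where
  u : ℂˣ
  t : ℂ

instance : One Aff := ⟨⟨1, 0⟩⟩
instance : Mul Aff := ⟨fun a b => ⟨a.u * b.u, (a.u : ℂ) * b.t + a.t⟩⟩
instance : Inv Aff := ⟨fun a => ⟨a.u⁻¹, -(((a.u⁻¹ : ℂˣ) : ℂ)) * a.t⟩⟩

@[simp] lemma Aff.one_u : (1 : Aff).u = 1 := rfl
@[simp] lemma Aff.one_t : (1 : Aff).t = 0 := rfl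
@[simp] lemma Aff.mul_u (a b : Aff) : (a * b).u = a.u * b.u := rfl
@[simp] lemma Aff.mul_t (a b : Aff) : (a * b).t = (a.u : ℂ) * b.t + a.t := rfl
@[simp] lemma Aff.inv_u (a : Aff) : (a⁻¹).u = a.u⁻¹ := rfl
@[simp] lemma Aff.inv_t (a : Aff) : (a⁻¹).t = -(((a.u⁻¹ : ℂˣ) : ℂ)) * a.t := rfl

instance : Group Aff where
  mul_assoc a b c := by
    ext
    · simp [mul_assoc]
    · simp [mul_add, mul_assoc]; ring
  one_mul a := by ext <;> simp
  mul_one a := by ext <;> simp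
  inv_mul_cancel a := by ext <;> simp

def geomc (x : ℂ) (a : ℕ) : ℂ := ∑ k ∈ Finset.range a, x ^ k

@[simp] lemma geomc_zero (x : ℂ) : geomc x 0 = 0 := by simp [geomc]

lemma geomc_succ (x : ℂ) (a : ℕ) : geomc x (a + 1) = 1 + x * geomc x a := by
  simp only [geomc, Finset.sum_range_succ', pow_zero, pow_succ, Finset.mul_sum]
  rw [add_comm]
  congr 1
  apply Finset.sum_congr rfl
  intro k _
  ring

@[simp] lemma geomc_one (a : ℕ) : geomc 1 a = a := by simp [geomc]

lemma Aff.pow_mk (u : ℂˣ) (c : ℂ) (k : ℕ) :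
    (⟨u, c⟩ : Aff) ^ k = ⟨u ^ k, geomc (u : ℂ) k * c⟩ := by
  induction k with
  | zero => ext <;> simp
  | succ k ih =>
    rw [pow_succ', ih]
    ext <;> simp [geomc_succ] <;> ring

def sa (L : List (ℕ × ℕ)) : ℕ := (L.map Prod.fst).sum
def sb (L : List (ℕ × ℕ)) : ℕ := (L.map Prod.snd).sum

@[simp] lemma sa_nil : sa [] = 0 := rfl
@[simp] lemma sb_nil : sb [] = 0 := rfl
@[simp] lemma sa_cons (ab : ℕ × ℕ) (L : List (ℕ × ℕ)) : sa (ab :: L) = ab.1 + sa L := rfl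
@[simp] lemma sb_cons (ab : ℕ × ℕ) (L : List (ℕ × ℕ)) : sb (ab :: L) = ab.2 + sb L := rfl

def Dac (x y : ℂ) : List (ℕ × ℕ) → ℂ
  | [] => 0
  | (a, b) :: L => geomc x a + x ^ a * y ^ b * Dac x y L

def Dbc (x y : ℂ) : List (ℕ × ℕ) → ℂ
  | [] => 0
  | (a, b) :: L => x ^ a * geomc y b + x ^ a * y ^ b * Dbc x y L

@[simp] lemma Dac_nil (x y : ℂ) : Dac x y [] = 0 := rfl
@[simp] lemma Dbc_nil (x y : ℂ) : Dbc x y [] = 0 := rfl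
lemma Dac_cons (x y : ℂ) (a b : ℕ) (L) :
    Dac x y ((a, b) :: L) = geomc x a + x ^ a * y ^ b * Dac x y L := rfl
lemma Dbc_cons (x y : ℂ) (a b : ℕ) (L) :
    Dbc x y ((a, b) :: L) = x ^ a * geomc y b + x ^ a * y ^ b * Dbc x y L := rfl

lemma Dac_one (L : List (ℕ × ℕ)) : Dac 1 1 L = (sa L : ℂ) := by
  induction L with
  | nil => simp
  | cons ab L ih => obtain ⟨a, b⟩ := ab; simp [Dac_cons, ih]

lemma aff_prod (xu yu : ℂˣ) (s : ℂ) (L : List (ℕ × ℕ)) :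
    ((L.map fun ab => (⟨xu, 1⟩ : Aff) ^ ab.1 * (⟨yu, s⟩ : Aff) ^ ab.2).prod : Aff)
      = ⟨xu ^ sa L * yu ^ sb L, Dac (xu : ℂ) (yu : ℂ) L + Dbc (xu : ℂ) (yu : ℂ) L * s⟩ := by
  induction L with
  | nil => ext <;> simp
  | cons ab L ih =>
    obtain ⟨a, b⟩ := ab
    rw [List.map_cons, List.prod_cons, ih, Aff.pow_mk, Aff.pow_mk]
    ext
    · simp only [Aff.mul_u, sa_cons, sb_cons, pow_add]
      simp [mul_comm, mul_assoc, mul_left_comm]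
    · simp [Dac_cons, Dbc_cons]
      ring

end Aux
noncomputable section Poly

open Polynomial

def geomP (d a : ℕ) : Polynomial ℕ := ∑ k ∈ Finset.range a, X ^ (d * k)

def Gp (p q : ℕ) : List (ℕ × ℕ) → Polynomial ℕ
  | [] => 0
  | (a, b) :: L => X ^ (p * (b + sb L)) * geomP q a + X ^ (q * a) * Gp p q L

def Hp (p q : ℕ) : List (ℕ × ℕ) → Polynomial ℕ
  | [] => 0
  | (a, b) :: L => X ^ (q * a + p * (sb L + 1)) * geomP p b + X ^ (q * a) * Hp p q L

def geomPC (d a : ℕ) : Polynomial ℂ := ∑ k ∈ Finset.range a, X ^ (d * k)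

def Gc (p q : ℕ) (L : List (ℕ × ℕ)) : Polynomial ℂ := (Gp p q L).map (Nat.castRingHom ℂ)
def Hc (p q : ℕ) (L : List (ℕ × ℕ)) : Polynomial ℂ := (Hp p q L).map (Nat.castRingHom ℂ)

@[simp] lemma geomP_map (d a : ℕ) : (geomP d a).map (Nat.castRingHom ℂ) = geomPC d a := by
  simp [geomP, geomPC, Polynomial.map_sum]

@[simp] lemma Gc_nil (p q : ℕ) : Gc p q [] = 0 := by simp [Gc, Gp]
@[simp] lemma Hc_nil (p q : ℕ) : Hc p q [] = 0 := by simp [Hc, Hp]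

lemma Gc_cons (p q a b : ℕ) (L) :
    Gc p q ((a, b) :: L) = X ^ (p * (b + sb L)) * geomPC q a + X ^ (q * a) * Gc p q L := by
  simp [Gc, Gp, Polynomial.map_add, Polynomial.map_mul, Polynomial.map_pow]

lemma Hc_cons (p q a b : ℕ) (L) :
    Hc p q ((a, b) :: L) = X ^ (q * a + p * (sb L + 1)) * geomPC p b + X ^ (q * a) * Hc p q L := by
  simp [Hc, Hp, Polynomial.map_add, Polynomial.map_mul, Polynomial.map_pow]

lemma eval_geomPC (d a : ℕ) (τ : ℂ) : (geomPC d a).eval τ = geomc (τ ^ d) a := by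
  simp [geomPC, geomc, eval_finset_sum, pow_mul]

lemma geomc_rev (x : ℂ) (hx : x ≠ 0) (b : ℕ) :
    x ^ b * geomc x⁻¹ b = x * geomc x b := by
  induction b with
  | zero => simp
  | succ b ih =>
    have h1 : geomc x⁻¹ (b + 1) = geomc x⁻¹ b + x⁻¹ ^ b := by
      simp [geomc, Finset.sum_range_succ]
    have hxb : x ^ (b + 1) * x⁻¹ ^ b = x := by
      rw [pow_succ, mul_comm (x ^ b) x, mul_assoc, ← mul_pow, mul_inv_cancel₀ hx, one_pow,
        mul_one]
    have h2 : x ^ (b + 1) * geomc x⁻¹ b = x * (x * geomc x b) := by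
      rw [pow_succ, mul_comm (x ^ b) x, mul_assoc, ih]
    rw [h1, mul_add, hxb, h2, geomc_succ]
    ring

lemma eval_Gc (p q : ℕ) (τ : ℂ) (hτ : τ ≠ 0) (L : List (ℕ × ℕ)) :
    (Gc p q L).eval τ = τ ^ (p * sb L) * Dac (τ ^ q) ((τ⁻¹) ^ p) L := by
  induction L with
  | nil => simp
  | cons ab L ih =>
    obtain ⟨a, b⟩ := ab
    rw [Gc_cons, Dac_cons]
    simp only [eval_add, eval_mul, eval_pow, eval_X, eval_geomPC, ih, sb_cons]
    rw [mul_add]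
    congr 1
    rw [inv_pow, inv_pow, ← pow_mul, ← pow_mul]
    field_simp
    ring

lemma eval_Hc (p q : ℕ) (τ : ℂ) (hτ : τ ≠ 0) (L : List (ℕ × ℕ)) :
    (Hc p q L).eval τ = τ ^ (p * sb L) * Dbc (τ ^ q) ((τ⁻¹) ^ p) L := by
  induction L with
  | nil => simp
  | cons ab L ih =>
    obtain ⟨a, b⟩ := ab
    rw [Hc_cons, Dbc_cons]
    simp only [eval_add, eval_mul, eval_pow, eval_X, eval_geomPC, ih, sb_cons, inv_pow]
    have hrev := geomc_rev (τ ^ p) (pow_ne_zero _ hτ) b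
    have hb : ((τ ^ p)⁻¹) ^ b * (τ ^ p) ^ b = 1 := by
      rw [← mul_pow, inv_mul_cancel₀ (pow_ne_zero _ hτ), one_pow]
    linear_combination (-(τ ^ (q * a)) * τ ^ (p * sb L)) * hrev +
      (-(τ ^ (q * a)) * τ ^ (p * sb L) * Dbc (τ ^ q) ((τ ^ p)⁻¹) L) * hb

end Poly
noncomputable section Poly2

open Polynomial

lemma geomPC_mul (d a : ℕ) (hd : True) :
    ((X : Polynomial ℂ) ^ d - 1) * geomPC d a = X ^ (d * a) - 1 := by
  have h := geom_sum_mul ((X : Polynomial ℂ) ^ d) a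
  simp only [geomPC, pow_mul]
  linear_combination h

lemma key_identity (p q : ℕ) (L : List (ℕ × ℕ)) :
    ((X : Polynomial ℂ) ^ q - 1) * X ^ p * Gc p q L + X ^ (p * sb L + p)
      = ((X : Polynomial ℂ) ^ p - 1) * Hc p q L + X ^ (q * sa L + p) := by
  induction L with
  | nil => simp
  | cons ab L ih =>
    obtain ⟨a, b⟩ := ab
    rw [Gc_cons, Hc_cons]
    have hg := geomPC_mul q a trivial
    have hh := geomPC_mul p b trivial
    simp only [sa_cons, sb_cons]
    linear_combination (X : Polynomial ℂ) ^ (q * a) * ih +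
      (X : Polynomial ℂ) ^ (p * (b + sb L) + p) * hg -
      (X : Polynomial ℂ) ^ (q * a + p * (sb L + 1)) * hh

lemma geomP_coeff (d a k : ℕ) (hd : 0 < d) (hk : k < a) : (geomP d a).coeff (d * k) = 1 := by
  rw [geomP, finset_sum_coeff]
  rw [Finset.sum_eq_single k]
  · simp
  · intro j _ hj
    rw [coeff_X_pow, if_neg]
    exact fun h => hj (Nat.eq_of_mul_eq_mul_left hd h).symm
  · intro h
    exact absurd (Finset.mem_range.mpr hk) h

lemma Gp_coeff_pair (p q : ℕ) (hq : 0 < q) (L : List (ℕ × ℕ))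
    (h : ∃ ab ∈ L, 2 ≤ ab.1) :
    ∃ e, (Gp p q L).coeff e ≠ 0 ∧ (Gp p q L).coeff (e + q) ≠ 0 := by
  induction L with
  | nil => simp at h
  | cons ab L ih =>
    obtain ⟨a, b⟩ := ab
    obtain ⟨ab', hmem, h2⟩ := h
    have hG : Gp p q ((a, b) :: L)
        = X ^ (p * (b + sb L)) * geomP q a + X ^ (q * a) * Gp p q L := rfl
    rcases List.mem_cons.mp hmem with rfl | htail
    · refine ⟨p * (b + sb L), ?_, ?_⟩
      · rw [hG, coeff_add]
        have h1 : (X ^ (p * (b + sb L)) * geomP q a).coeff (p * (b + sb L)) = 1 := by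
          have := coeff_X_pow_mul (geomP q a) (p * (b + sb L)) 0
          rw [zero_add] at this
          rw [this]
          have := geomP_coeff q a 0 hq (by omega)
          simpa using this
        rw [h1]
        simp
      · rw [hG, coeff_add]
        have h1 : (X ^ (p * (b + sb L)) * geomP q a).coeff (p * (b + sb L) + q) = 1 := by
          rw [add_comm (p * (b + sb L)) q, coeff_X_pow_mul]
          have := geomP_coeff q a 1 hq (by simp at h2; omega)
          simpa using this
        rw [h1]
        simp
    · obtain ⟨e, h1, h2'⟩ := ih ⟨ab', htail, h2⟩
      refine ⟨q * a + e, ?_, ?_⟩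
      · rw [hG, coeff_add, coeff_X_pow_mul' (geomP q a), add_comm (q * a) e,
          coeff_X_pow_mul]
        intro hzero
        exact h1 (by omega)
      · rw [hG, coeff_add, coeff_X_pow_mul' (geomP q a),
          show q * a + e + q = (e + q) + q * a by omega, coeff_X_pow_mul]
        intro hzero
        exact h2' (by omega)

lemma Hp_coeff_pair (p q : ℕ) (hp : 0 < p) (L : List (ℕ × ℕ))
    (h : ∃ ab ∈ L, 2 ≤ ab.2) :
    ∃ e, (Hp p q L).coeff e ≠ 0 ∧ (Hp p q L).coeff (e + p) ≠ 0 := by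
  induction L with
  | nil => simp at h
  | cons ab L ih =>
    obtain ⟨a, b⟩ := ab
    obtain ⟨ab', hmem, h2⟩ := h
    have hH : Hp p q ((a, b) :: L)
        = X ^ (q * a + p * (sb L + 1)) * geomP p b + X ^ (q * a) * Hp p q L := rfl
    rcases List.mem_cons.mp hmem with rfl | htail
    · refine ⟨q * a + p * (sb L + 1), ?_, ?_⟩
      · rw [hH, coeff_add]
        have h1 : (X ^ (q * a + p * (sb L + 1)) * geomP p b).coeff (q * a + p * (sb L + 1))
            = 1 := by
          have := coeff_X_pow_mul (geomP p b) (q * a + p * (sb L + 1)) 0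
          rw [zero_add] at this
          rw [this]
          have := geomP_coeff p b 0 hp (by omega)
          simpa using this
        rw [h1]
        simp
      · rw [hH, coeff_add]
        have h1 : (X ^ (q * a + p * (sb L + 1)) * geomP p b).coeff
            ((q * a + p * (sb L + 1)) + p) = 1 := by
          rw [add_comm (q * a + p * (sb L + 1)) p, coeff_X_pow_mul]
          have := geomP_coeff p b 1 hp (by simp at h2; omega)
          simpa using this
        rw [h1]
        simp
    · obtain ⟨e, h1, h2'⟩ := ih ⟨ab', htail, h2⟩
      refine ⟨q * a + e, ?_, ?_⟩
      · rw [hH, coeff_add, coeff_X_pow_mul' (geomP p b), add_comm (q * a) e,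
          coeff_X_pow_mul]
        intro hzero
        exact h1 (by omega)
      · rw [hH, coeff_add, coeff_X_pow_mul' (geomP p b),
          show q * a + e + p = (e + p) + q * a by omega, coeff_X_pow_mul]
        intro hzero
        exact h2' (by omega)

lemma Gc_eval_one (p q : ℕ) (L : List (ℕ × ℕ)) : (Gc p q L).eval 1 = (sa L : ℂ) := by
  rw [eval_Gc p q 1 one_ne_zero L]
  simp [Dac_one]

lemma Gc_ne_zero (p q : ℕ) (L : List (ℕ × ℕ)) (h : 0 < sa L) : Gc p q L ≠ 0 := by
  intro h0
  have := Gc_eval_one p q L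
  rw [h0] at this
  have h2 : sa L = 0 := by
    have h3 : ((sa L : ℕ) : ℂ) = 0 := by simpa using this.symm
    exact_mod_cast h3
  omega

lemma Dbc_one (L : List (ℕ × ℕ)) : Dbc 1 1 L = (sb L : ℂ) := by
  induction L with
  | nil => simp
  | cons ab L ih => obtain ⟨a, b⟩ := ab; simp [Dbc_cons, ih]

lemma Hc_eval_one (p q : ℕ) (L : List (ℕ × ℕ)) : (Hc p q L).eval 1 = (sb L : ℂ) := by
  rw [eval_Hc p q 1 one_ne_zero L]
  simp [Dbc_one]

lemma Hc_ne_zero (p q : ℕ) (L : List (ℕ × ℕ)) (h : 0 < sb L) : Hc p q L ≠ 0 := by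
  intro h0
  have := Hc_eval_one p q L
  rw [h0] at this
  have h2 : sb L = 0 := by
    have h3 : ((sb L : ℕ) : ℂ) = 0 := by simpa using this.symm
    exact_mod_cast h3
  omega

end Poly2
noncomputable section Widths

open Polynomial

lemma Xpow_sub_one_ne_zero {N : ℕ} (hN : 0 < N) : ((X : Polynomial ℂ) ^ N - 1) ≠ 0 := by
  have := X_pow_sub_C_ne_zero hN (1 : ℂ)
  simpa using this

lemma natDegree_Xpow_sub_one {N : ℕ} : ((X : Polynomial ℂ) ^ N - 1).natDegree = N := by
  have := natDegree_X_pow_sub_C (n := N) (r := (1 : ℂ))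
  simpa using this

lemma rm_le_one {N : ℕ} (hN : 0 < N) (τ : ℂ) :
    rootMultiplicity τ ((X : Polynomial ℂ) ^ N - 1) ≤ 1 := by
  by_contra h
  push_neg at h
  have hdvd : ((X : Polynomial ℂ) - C τ) ^ 2 ∣ (X : Polynomial ℂ) ^ N - 1 :=
    (pow_dvd_pow _ h).trans (pow_rootMultiplicity_dvd _ _)
  have hsep : ((X : Polynomial ℂ) ^ N - C 1).Separable :=
    separable_X_pow_sub_C 1 (by exact_mod_cast hN.ne') one_ne_zero
  have hsq : Squarefree ((X : Polynomial ℂ) ^ N - 1) := by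
    have := hsep.squarefree
    simpa using this
  have := hsq ((X : Polynomial ℂ) - C τ) (by simpa [sq] using hdvd)
  exact (Polynomial.not_isUnit_X_sub_C τ) this

/-- If every nonzero root of `P` is simple and is an `N`-th root of unity,
then `natDegree P ≤ rootMultiplicity 0 P + N`. -/
lemma width_le (P : Polynomial ℂ) (hP : P ≠ 0) (N : ℕ) (hN : 0 < N)
    (hroots : ∀ τ : ℂ, τ ≠ 0 → P.eval τ = 0 →
      rootMultiplicity τ P = 1 ∧ τ ^ N = 1) :
    P.natDegree ≤ rootMultiplicity 0 P + N := by
  classical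
  have hcard : Multiset.card P.roots = P.natDegree :=
    splits_iff_card_roots.mp (IsAlgClosed.splits P)
  set T : Multiset ℂ := P.roots.filter (fun x => ¬ x = 0) with hT
  have hsplit : Multiset.card (P.roots.filter (fun x => x = 0)) + Multiset.card T
      = Multiset.card P.roots := by
    rw [hT, ← Multiset.card_add, Multiset.filter_add_not]
  have hzerocard : Multiset.card (P.roots.filter (fun x => x = 0))
      = rootMultiplicity 0 P := by
    rw [← count_roots P, Multiset.count_eq_card_filter_eq]
    congr 1
    apply Multiset.filter_congr
    intro x _
    exact eq_comm
  have hTsub : ∀ τ ∈ T, τ ∈ (((X : Polynomial ℂ) ^ N - 1).roots) := by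
    intro τ hτ
    obtain ⟨hmem, hτ'⟩ := Multiset.mem_filter.mp hτ
    have heval : P.eval τ = 0 := ((mem_roots hP).mp hmem)
    have hpow := (hroots τ hτ' heval).2
    rw [mem_roots (Xpow_sub_one_ne_zero hN)]
    simp [IsRoot, hpow]
  have hTnodup : T.Nodup := by
    rw [Multiset.nodup_iff_count_le_one]
    intro τ
    by_cases hmem : τ ∈ T
    · obtain ⟨hmem', hτ'⟩ := Multiset.mem_filter.mp hmem
      have heval : P.eval τ = 0 := ((mem_roots hP).mp hmem')
      have h1 := (hroots τ hτ' heval).1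
      calc T.count τ ≤ P.roots.count τ :=
            Multiset.count_le_of_le τ (Multiset.filter_le _ _)
        _ = rootMultiplicity τ P := count_roots P
        _ = 1 := h1
    · rw [Multiset.count_eq_zero_of_notMem hmem]
      omega
  have hTcard : Multiset.card T ≤ N := by
    have hsub : T.toFinset ⊆ (((X : Polynomial ℂ) ^ N - 1).roots).toFinset := by
      intro τ hτ
      rw [Multiset.mem_toFinset] at *
      exact hTsub τ hτ
    calc Multiset.card T = T.toFinset.card :=
          (Multiset.toFinset_card_eq_card_iff_nodup.mpr hTnodup).symm
      _ ≤ (((X : Polynomial ℂ) ^ N - 1).roots).toFinset.card := Finset.card_le_card hsub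
      _ ≤ Multiset.card (((X : Polynomial ℂ) ^ N - 1).roots) := Multiset.toFinset_card_le _
      _ ≤ N := by
          have h1 := Polynomial.card_roots' ((X : Polynomial ℂ) ^ N - 1)
          rw [natDegree_Xpow_sub_one] at h1
          exact h1
  omega

lemma width_ge (P : Polynomial ℂ) (e d : ℕ) (h1 : P.coeff e ≠ 0) (h2 : P.coeff (e + d) ≠ 0) :
    rootMultiplicity 0 P + d ≤ P.natDegree := by
  have hdeg : e + d ≤ P.natDegree := le_natDegree_of_ne_zero h2
  have hrm : rootMultiplicity 0 P ≤ e := by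
    by_contra h
    push_neg at h
    have hdvd : ((X : Polynomial ℂ)) ^ (e + 1) ∣ P := by
      have := pow_rootMultiplicity_dvd P (0 : ℂ)
      simp only [map_zero, sub_zero] at this
      exact (pow_dvd_pow _ h).trans this
    obtain ⟨R, hR⟩ := hdvd
    apply h1
    rw [hR, mul_comm, coeff_mul_X_pow', if_neg (by omega)]
  omega

end Widths
section Grp

lemma mem_closure_images {Γ : Type*} [Group Γ] (φ : F2 →* Γ) (g : F2) :
    φ g ∈ Subgroup.closure ({φ A, φ B} : Set Γ) := by
  induction g using FreeGroup.induction_on with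
  | C1 => simp only [map_one]; exact Subgroup.one_mem _
  | of x =>
    cases x
    · exact Subgroup.subset_closure (Set.mem_insert_iff.mpr (Or.inr rfl))
    · exact Subgroup.subset_closure (Set.mem_insert_iff.mpr (Or.inl rfl))
  | inv_of x ih => rw [map_inv]; exact Subgroup.inv_mem _ ih
  | mul x y ihx ihy => rw [map_mul]; exact Subgroup.mul_mem _ ihx ihy

/-- The abelianization map to `ℤ × ℤ`. -/
def abm : F2 →* Multiplicative (ℤ × ℤ) :=
  FreeGroup.lift fun c => Multiplicative.ofAdd (if c then ((1 : ℤ), (0 : ℤ)) else (0, 1))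

@[simp] lemma abm_A : abm A = Multiplicative.ofAdd ((1 : ℤ), (0 : ℤ)) := by
  simp [abm, A]

@[simp] lemma abm_B : abm B = Multiplicative.ofAdd ((0 : ℤ), (1 : ℤ)) := by
  simp [abm, B]

lemma abm_surjective : Function.Surjective abm := by
  intro z
  refine ⟨A ^ (Multiplicative.toAdd z).1 * B ^ (Multiplicative.toAdd z).2, ?_⟩
  rw [map_mul, map_zpow, map_zpow, abm_A, abm_B]
  rw [← ofAdd_zsmul, ← ofAdd_zsmul, ← ofAdd_add]
  simp only [Prod.smul_mk, smul_eq_mul, mul_one, mul_zero, Prod.mk_add_mk, add_zero, zero_add]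
  simp

lemma abm_list (L : List (ℕ × ℕ)) :
    abm ((L.map fun ab => A ^ ab.1 * B ^ ab.2).prod)
      = Multiplicative.ofAdd ((sa L : ℤ), (sb L : ℤ)) := by
  induction L with
  | nil =>
    simp only [List.map_nil, List.prod_nil, map_one, sa_nil, sb_nil, Nat.cast_zero]
    rfl
  | cons ab L ih =>
    obtain ⟨a, b⟩ := ab
    rw [List.map_cons, List.prod_cons, map_mul, map_mul, map_pow, map_pow, abm_A, abm_B, ih]
    rw [← ofAdd_nsmul, ← ofAdd_nsmul, ← ofAdd_add, ← ofAdd_add]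
    congr 1
    simp only [Prod.smul_mk, smul_eq_mul, mul_one, mul_zero, Prod.mk_add_mk, add_zero, zero_add,
      sa_cons, sb_cons, Prod.mk.injEq]
    push_cast
    constructor <;> ring

/-- Arithmetic: if `(P,Q)` and `(R,S)` generate `ℤ²`, then `P`, `Q` are coprime. -/
lemma coprime_of_generates {P Q R S k l k' l' : ℤ} (hP : P ≠ 0)
    (e1 : k * P + l * R = 1) (e2 : k * Q + l * S = 0)
    (e3 : k' * P + l' * R = 0) (e4 : k' * Q + l' * S = 1) :
    IsCoprime P Q := by
  set D : ℤ := P * S - Q * R with hD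
  have h2 : l * D = -Q := by linear_combination -Q * e1 + P * e2
  have h3 : k' * D = -R := by linear_combination S * e3 - R * e4
  have h4 : l' * D = P := by linear_combination -Q * e3 + P * e4
  have hDne : D ≠ 0 := by
    intro h0
    rw [h0, mul_zero] at h4
    exact hP h4.symm
  have key : D * (k * P + k' * Q) = D * 1 := by
    linear_combination D * e1 + Q * h3 - R * h2
  have := mul_left_cancel₀ hDne key
  exact ⟨k, k', by linarith⟩

end Grp
noncomputable section MultLemmas

open Polynomial

lemma mult_lemma_G {p q : ℕ} (hp : 0 < p) (hq : 0 < q) (G H : Polynomial ℂ)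
    (hG : G ≠ 0) (hH : H ≠ 0)
    (hid : ((X : Polynomial ℂ) ^ q - 1) * X ^ p * G = ((X : Polynomial ℂ) ^ p - 1) * H)
    (τ : ℂ) (hτ : τ ≠ 0) (hGτ : G.eval τ = 0) (hHτ : H.eval τ ≠ 0) :
    rootMultiplicity τ G = 1 ∧ τ ^ p = 1 := by
  have hq0 : ((X : Polynomial ℂ) ^ q - 1) ≠ 0 := Xpow_sub_one_ne_zero hq
  have hp0 : ((X : Polynomial ℂ) ^ p - 1) ≠ 0 := Xpow_sub_one_ne_zero hp
  have hXp : ((X : Polynomial ℂ) ^ p) ≠ 0 := pow_ne_zero _ X_ne_zero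
  have hL : rootMultiplicity τ (((X : Polynomial ℂ) ^ q - 1) * X ^ p * G)
      = rootMultiplicity τ ((X : Polynomial ℂ) ^ q - 1)
        + rootMultiplicity τ ((X : Polynomial ℂ) ^ p) + rootMultiplicity τ G := by
    rw [rootMultiplicity_mul (mul_ne_zero (mul_ne_zero hq0 hXp) hG),
      rootMultiplicity_mul (mul_ne_zero hq0 hXp)]
  have hR : rootMultiplicity τ (((X : Polynomial ℂ) ^ p - 1) * H)
      = rootMultiplicity τ ((X : Polynomial ℂ) ^ p - 1) + rootMultiplicity τ H := by
    rw [rootMultiplicity_mul (mul_ne_zero hp0 hH)]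
  have hXp0 : rootMultiplicity τ ((X : Polynomial ℂ) ^ p) = 0 := by
    apply rootMultiplicity_eq_zero
    simp [IsRoot, hτ, pow_eq_zero_iff, hp.ne']
  have hH0 : rootMultiplicity τ H = 0 := rootMultiplicity_eq_zero hHτ
  have hGpos : 0 < rootMultiplicity τ G := (rootMultiplicity_pos hG).mpr hGτ
  have hble : rootMultiplicity τ ((X : Polynomial ℂ) ^ p - 1) ≤ 1 := rm_le_one hp τ
  have hale : rootMultiplicity τ ((X : Polynomial ℂ) ^ q - 1) ≤ 1 := rm_le_one hq τ
  have heq : rootMultiplicity τ ((X : Polynomial ℂ) ^ q - 1)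
      + rootMultiplicity τ ((X : Polynomial ℂ) ^ p) + rootMultiplicity τ G
      = rootMultiplicity τ ((X : Polynomial ℂ) ^ p - 1) + rootMultiplicity τ H := by
    rw [← hL, ← hR, hid]
  rw [hXp0, hH0] at heq
  have hbpos : 0 < rootMultiplicity τ ((X : Polynomial ℂ) ^ p - 1) := by omega
  have hroot := (rootMultiplicity_pos hp0).mp hbpos
  simp only [IsRoot, eval_sub, eval_pow, eval_X, eval_one, sub_eq_zero] at hroot
  exact ⟨by omega, hroot⟩

lemma mult_lemma_H {p q : ℕ} (hp : 0 < p) (hq : 0 < q) (G H : Polynomial ℂ)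
    (hG : G ≠ 0) (hH : H ≠ 0)
    (hid : ((X : Polynomial ℂ) ^ q - 1) * X ^ p * G = ((X : Polynomial ℂ) ^ p - 1) * H)
    (τ : ℂ) (hτ : τ ≠ 0) (hHτ : H.eval τ = 0) (hGτ : G.eval τ ≠ 0) :
    rootMultiplicity τ H = 1 ∧ τ ^ q = 1 := by
  have hq0 : ((X : Polynomial ℂ) ^ q - 1) ≠ 0 := Xpow_sub_one_ne_zero hq
  have hp0 : ((X : Polynomial ℂ) ^ p - 1) ≠ 0 := Xpow_sub_one_ne_zero hp
  have hXp : ((X : Polynomial ℂ) ^ p) ≠ 0 := pow_ne_zero _ X_ne_zero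
  have hL : rootMultiplicity τ (((X : Polynomial ℂ) ^ q - 1) * X ^ p * G)
      = rootMultiplicity τ ((X : Polynomial ℂ) ^ q - 1)
        + rootMultiplicity τ ((X : Polynomial ℂ) ^ p) + rootMultiplicity τ G := by
    rw [rootMultiplicity_mul (mul_ne_zero (mul_ne_zero hq0 hXp) hG),
      rootMultiplicity_mul (mul_ne_zero hq0 hXp)]
  have hR : rootMultiplicity τ (((X : Polynomial ℂ) ^ p - 1) * H)
      = rootMultiplicity τ ((X : Polynomial ℂ) ^ p - 1) + rootMultiplicity τ H := by
    rw [rootMultiplicity_mul (mul_ne_zero hp0 hH)]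
  have hXp0 : rootMultiplicity τ ((X : Polynomial ℂ) ^ p) = 0 := by
    apply rootMultiplicity_eq_zero
    simp [IsRoot, hτ, pow_eq_zero_iff, hp.ne']
  have hG0 : rootMultiplicity τ G = 0 := rootMultiplicity_eq_zero hGτ
  have hHpos : 0 < rootMultiplicity τ H := (rootMultiplicity_pos hH).mpr hHτ
  have hble : rootMultiplicity τ ((X : Polynomial ℂ) ^ p - 1) ≤ 1 := rm_le_one hp τ
  have hale : rootMultiplicity τ ((X : Polynomial ℂ) ^ q - 1) ≤ 1 := rm_le_one hq τ
  have heq : rootMultiplicity τ ((X : Polynomial ℂ) ^ q - 1)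
      + rootMultiplicity τ ((X : Polynomial ℂ) ^ p) + rootMultiplicity τ G
      = rootMultiplicity τ ((X : Polynomial ℂ) ^ p - 1) + rootMultiplicity τ H := by
    rw [← hL, ← hR, hid]
  rw [hXp0, hG0] at heq
  have hapos : 0 < rootMultiplicity τ ((X : Polynomial ℂ) ^ q - 1) := by omega
  have hroot := (rootMultiplicity_pos hq0).mp hapos
  simp only [IsRoot, eval_sub, eval_pow, eval_X, eval_one, sub_eq_zero] at hroot
  exact ⟨by omega, hroot⟩

end MultLemmas
section Coprime

lemma primitive_aux (w : F2) (hprim : IsPrimitive w) :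
    ∃ e : F2 ≃* F2, e A = w ∨ e B = w := by
  obtain ⟨x, y, ⟨e, heA, heB⟩, hor⟩ := hprim
  rcases hor with rfl | rfl
  · exact ⟨e, Or.inl heA⟩
  · exact ⟨e, Or.inr heB⟩

lemma coprime_of_primitive (w : F2) (hprim : IsPrimitive w) (L₀ : List (ℕ × ℕ))
    (hwL : w = (L₀.map fun ab => A ^ ab.1 * B ^ ab.2).prod) (hp0 : sa L₀ ≠ 0) :
    Nat.Coprime (sa L₀) (sb L₀) := by
  obtain ⟨e, he⟩ := primitive_aux w hprim
  set ψ : F2 →* Multiplicative (ℤ × ℤ) := abm.comp e.toMonoidHom with hψ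
  have hψsurj : Function.Surjective ψ := by
    intro z
    obtain ⟨g, hg⟩ := abm_surjective z
    exact ⟨e.symm g, by simp [hψ, MonoidHom.comp_apply, hg]⟩
  have hgen : ∀ z : Multiplicative (ℤ × ℤ), ∃ kk ll : ℤ, (ψ A) ^ kk * (ψ B) ^ ll = z := by
    intro z
    obtain ⟨g, hg⟩ := hψsurj z
    have hmem := mem_closure_images ψ g
    rw [hg] at hmem
    exact Subgroup.mem_closure_pair.mp hmem
  have habw : abm w = Multiplicative.ofAdd ((sa L₀ : ℤ), (sb L₀ : ℤ)) := by
    rw [hwL]; exact abm_list L₀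
  obtain ⟨k, l, hkl⟩ := hgen (Multiplicative.ofAdd (1, 0))
  obtain ⟨k', l', hkl'⟩ := hgen (Multiplicative.ofAdd (0, 1))
  have comp : ∀ (kk ll : ℤ) (t : ℤ × ℤ), (ψ A) ^ kk * (ψ B) ^ ll = Multiplicative.ofAdd t →
      kk * (Multiplicative.toAdd (ψ A)).1 + ll * (Multiplicative.toAdd (ψ B)).1 = t.1 ∧
      kk * (Multiplicative.toAdd (ψ A)).2 + ll * (Multiplicative.toAdd (ψ B)).2 = t.2 := by
    intro kk ll t ht
    have h := congrArg Multiplicative.toAdd ht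
    simp only [toAdd_mul, toAdd_zpow, toAdd_ofAdd] at h
    constructor
    · have h1 := congrArg Prod.fst h
      simpa [smul_eq_mul] using h1
    · have h2 := congrArg Prod.snd h
      simpa [smul_eq_mul] using h2
  obtain ⟨f1, f2⟩ := comp k l (1, 0) hkl
  obtain ⟨f3, f4⟩ := comp k' l' (0, 1) hkl'
  have hIC : IsCoprime ((sa L₀ : ℤ)) ((sb L₀ : ℤ)) := by
    have hPne : ((sa L₀ : ℤ)) ≠ 0 := by exact_mod_cast hp0
    rcases he with heA | heB
    · have hA : ψ A = Multiplicative.ofAdd ((sa L₀ : ℤ), (sb L₀ : ℤ)) := by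
        rw [hψ]; simp only [MonoidHom.comp_apply, MulEquiv.coe_toMonoidHom]
        rw [heA, habw]
      rw [hA] at f1 f2 f3 f4
      simp only [toAdd_ofAdd] at f1 f2 f3 f4
      exact coprime_of_generates hPne f1 f2 f3 f4
    · have hB : ψ B = Multiplicative.ofAdd ((sa L₀ : ℤ), (sb L₀ : ℤ)) := by
        rw [hψ]; simp only [MonoidHom.comp_apply, MulEquiv.coe_toMonoidHom]
        rw [heB, habw]
      rw [hB] at f1 f2 f3 f4
      simp only [toAdd_ofAdd] at f1 f2 f3 f4
      exact coprime_of_generates (R := (Multiplicative.toAdd (ψ A)).1)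
        (S := (Multiplicative.toAdd (ψ A)).2) (k := l) (l := k) (k' := l') (l' := k')
        hPne (by linarith) (by linarith) (by linarith) (by linarith)
  have := Int.isCoprime_iff_gcd_eq_one.mp hIC
  simpa [Int.gcd_natCast_natCast] using this

end Coprime
section Rep

lemma no_common_root_of_primitive (w : F2) (hprim : IsPrimitive w) (L₀ : List (ℕ × ℕ))
    (hwL : w = (L₀.map fun ab => A ^ ab.1 * B ^ ab.2).prod) (hp0 : sa L₀ ≠ 0) :
    ¬ ∃ τ : ℂ, τ ≠ 0 ∧ (Gc (sa L₀) (sb L₀) L₀).eval τ = 0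
      ∧ (Hc (sa L₀) (sb L₀) L₀).eval τ = 0 := by
  rintro ⟨τ, hτ0, hGτ, hHτ⟩
  set p := sa L₀ with hpdef
  set q := sb L₀ with hqdef
  set x₀ : ℂ := τ ^ q with hx₀def
  set y₀ : ℂ := (τ⁻¹) ^ p with hy₀def
  have hx0 : x₀ ≠ 0 := pow_ne_zero _ hτ0
  have hy0 : y₀ ≠ 0 := pow_ne_zero _ (inv_ne_zero hτ0)
  have hDa : Dac x₀ y₀ L₀ = 0 := by
    have h := eval_Gc p q τ hτ0 L₀
    rw [hGτ] at h
    rcases mul_eq_zero.mp h.symm with h' | h'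
    · exact absurd h' (pow_ne_zero _ hτ0)
    · exact h'
  have hDb : Dbc x₀ y₀ L₀ = 0 := by
    have h := eval_Hc p q τ hτ0 L₀
    rw [hHτ] at h
    rcases mul_eq_zero.mp h.symm with h' | h'
    · exact absurd h' (pow_ne_zero _ hτ0)
    · exact h'
  have hne11 : ¬ (x₀ = 1 ∧ y₀ = 1) := by
    rintro ⟨h1, h2⟩
    rw [h1, h2, Dac_one] at hDa
    have : p = 0 := by exact_mod_cast hDa
    exact hp0 this
  set s₀ : ℂ := if x₀ = 1 then 0 else (y₀ - 1) / (x₀ - 1) + 1 with hs₀def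
  have hs₀ : s₀ * (x₀ - 1) ≠ y₀ - 1 := by
    by_cases hx1 : x₀ = 1
    · have hy1 : y₀ ≠ 1 := fun h => hne11 ⟨hx1, h⟩
      rw [hs₀def, if_pos hx1, zero_mul]
      exact (sub_ne_zero.mpr hy1).symm
    · rw [hs₀def, if_neg hx1]
      have hx1' : x₀ - 1 ≠ 0 := sub_ne_zero.mpr hx1
      have hexp : ((y₀ - 1) / (x₀ - 1) + 1) * (x₀ - 1) = (y₀ - 1) + (x₀ - 1) := by
        field_simp
      rw [hexp]
      intro h
      exact hx1' (by linear_combination h)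
  set xu : ℂˣ := Units.mk0 x₀ hx0 with hxudef
  set yu : ℂˣ := Units.mk0 y₀ hy0 with hyudef
  have hxv : (xu : ℂ) = x₀ := rfl
  have hyv : (yu : ℂ) = y₀ := rfl
  set ρ : F2 →* Aff := FreeGroup.lift fun c => if c then (⟨xu, 1⟩ : Aff) else ⟨yu, s₀⟩
    with hρdef
  have hρA : ρ A = ⟨xu, 1⟩ := by rw [hρdef, A, FreeGroup.lift_apply_of]; simp
  have hρB : ρ B = ⟨yu, s₀⟩ := by rw [hρdef, B, FreeGroup.lift_apply_of]; simp
  have hρw : ρ w = 1 := by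
    rw [hwL, map_list_prod]
    have hmap : (L₀.map fun ab => A ^ ab.1 * B ^ ab.2).map ρ
        = L₀.map fun ab => (⟨xu, 1⟩ : Aff) ^ ab.1 * (⟨yu, s₀⟩ : Aff) ^ ab.2 := by
      rw [List.map_map]
      apply List.map_congr_left
      intro ab _
      simp only [Function.comp_apply, map_mul, map_pow, hρA, hρB]
    rw [hmap, aff_prod]
    have huone : (xu ^ p * yu ^ q : ℂˣ) = 1 := by
      apply Units.ext
      have hval : ((xu ^ p * yu ^ q : ℂˣ) : ℂ) = x₀ ^ p * y₀ ^ q := by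
        push_cast
        rw [hxv, hyv]
      have hcalc : (τ ^ q) ^ p * (τ⁻¹ ^ p) ^ q = 1 := by
        rw [inv_pow, inv_pow, ← pow_mul, ← pow_mul, mul_comm q p]
        exact mul_inv_cancel₀ (pow_ne_zero _ hτ0)
      rw [hval, hx₀def, hy₀def, Units.val_one]
      exact hcalc
    ext
    · rw [Aff.one_u, huone]
    · rw [Aff.one_t, hxv, hyv, hDa, hDb]
      ring
  obtain ⟨e, he⟩ := primitive_aux w hprim
  set φ : F2 →* Aff := ρ.comp e.toMonoidHom with hφdef
  have hmem : ∀ g : F2, ρ g ∈ Subgroup.closure ({φ A, φ B} : Set Aff) := by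
    intro g
    have h := mem_closure_images φ (e.symm g)
    have h2 : φ (e.symm g) = ρ g := by
      rw [hφdef]
      simp only [MonoidHom.comp_apply, MulEquiv.coe_toMonoidHom, MulEquiv.apply_symm_apply]
    rwa [h2] at h
  have hcomm : ρ A * ρ B = ρ B * ρ A := by
    rcases he with heA | heB
    · have hφA : φ A = 1 := by
        rw [hφdef]
        simp only [MonoidHom.comp_apply, MulEquiv.coe_toMonoidHom]
        rw [heA]
        exact hρw
      have hsub : Subgroup.closure ({φ A, φ B} : Set Aff) ≤ Subgroup.zpowers (φ B) := by
        apply (Subgroup.closure_le _).mpr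
        rintro z hz
        rcases Set.mem_insert_iff.mp hz with rfl | hz
        · rw [hφA]; exact Subgroup.one_mem _
        · rw [Set.mem_singleton_iff.mp hz]; exact Subgroup.mem_zpowers _
      obtain ⟨k1, hk1⟩ := Subgroup.mem_zpowers_iff.mp (hsub (hmem A))
      obtain ⟨k2, hk2⟩ := Subgroup.mem_zpowers_iff.mp (hsub (hmem B))
      rw [← hk1, ← hk2, ← zpow_add, ← zpow_add, add_comm]
    · have hφB : φ B = 1 := by
        rw [hφdef]
        simp only [MonoidHom.comp_apply, MulEquiv.coe_toMonoidHom]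
        rw [heB]
        exact hρw
      have hsub : Subgroup.closure ({φ A, φ B} : Set Aff) ≤ Subgroup.zpowers (φ A) := by
        apply (Subgroup.closure_le _).mpr
        rintro z hz
        rcases Set.mem_insert_iff.mp hz with rfl | hz
        · exact Subgroup.mem_zpowers _
        · rw [Set.mem_singleton_iff.mp hz, hφB]; exact Subgroup.one_mem _
      obtain ⟨k1, hk1⟩ := Subgroup.mem_zpowers_iff.mp (hsub (hmem A))
      obtain ⟨k2, hk2⟩ := Subgroup.mem_zpowers_iff.mp (hsub (hmem B))
      rw [← hk1, ← hk2, ← zpow_add, ← zpow_add, add_comm]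
  have hT := congrArg Aff.t hcomm
  rw [hρA, hρB] at hT
  simp only [Aff.mul_t] at hT
  rw [hxv, hyv] at hT
  apply hs₀
  linear_combination hT

end Rep
theorem stmt_18 (j : ℕ) (hj : 1 ≤ j) (m n : Fin j → ℤ)
    (hm : ∀ i, 0 < m i) (hn : ∀ i, 0 < n i)
    (w : F2) (hw : w = (List.ofFn fun i => A ^ (m i) * B ^ (n i)).prod)
    (hprim : IsPrimitive w) :
    (∀ i, m i = 1) ∨ (∀ i, n i = 1) := by
  by_contra hcon
  push_neg at hcon
  obtain ⟨⟨i₀, hi₀⟩, ⟨i₁, hi₁⟩⟩ := hcon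
  set L₀ : List (ℕ × ℕ) := List.ofFn (fun i => ((m i).toNat, (n i).toNat)) with hL₀
  have hwL : w = (L₀.map fun ab => A ^ ab.1 * B ^ ab.2).prod := by
    rw [hw, hL₀, List.map_ofFn]
    refine congrArg List.prod ?_
    refine congrArg List.ofFn ?_
    funext i
    simp only [Function.comp_apply]
    rw [← zpow_natCast A, ← zpow_natCast B, Int.toNat_of_nonneg (hm i).le,
      Int.toNat_of_nonneg (hn i).le]
  have hmemA : ∃ ab ∈ L₀, 2 ≤ ab.1 := by
    refine ⟨((m i₀).toNat, (n i₀).toNat), ?_, ?_⟩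
    · rw [hL₀]; exact List.mem_ofFn.mpr ⟨i₀, rfl⟩
    · have := hm i₀; simp only; omega
  have hmemB : ∃ ab ∈ L₀, 2 ≤ ab.2 := by
    refine ⟨((m i₁).toNat, (n i₁).toNat), ?_, ?_⟩
    · rw [hL₀]; exact List.mem_ofFn.mpr ⟨i₁, rfl⟩
    · have := hn i₁; simp only; omega
  set p := sa L₀ with hpdef
  set q := sb L₀ with hqdef
  have hp2 : 2 ≤ p := by
    obtain ⟨ab, habmem, hab⟩ := hmemA
    have h1 : ab.1 ≤ p := by
      rw [hpdef, sa]
      exact List.single_le_sum (fun x _ => Nat.zero_le x) _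
        (List.mem_map_of_mem (f := Prod.fst) habmem)
    omega
  have hq2 : 2 ≤ q := by
    obtain ⟨ab, habmem, hab⟩ := hmemB
    have h1 : ab.2 ≤ q := by
      rw [hqdef, sb]
      exact List.single_le_sum (fun x _ => Nat.zero_le x) _
        (List.mem_map_of_mem (f := Prod.snd) habmem)
    omega
  have hcop : Nat.Coprime p q := coprime_of_primitive w hprim L₀ hwL (by omega)
  by_cases hroot : ∃ τ : ℂ, τ ≠ 0 ∧ (Gc p q L₀).eval τ = 0 ∧ (Hc p q L₀).eval τ = 0
  · exact no_common_root_of_primitive w hprim L₀ hwL (by omega) hroot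
  · push_neg at hroot
    have hGne : Gc p q L₀ ≠ 0 := Gc_ne_zero p q L₀ (by omega)
    have hHne : Hc p q L₀ ≠ 0 := Hc_ne_zero p q L₀ (by omega)
    have hid : ((Polynomial.X : Polynomial ℂ) ^ q - 1) * Polynomial.X ^ p * Gc p q L₀
        = ((Polynomial.X : Polynomial ℂ) ^ p - 1) * Hc p q L₀ := by
      have h := key_identity p q L₀
      rw [← hpdef, ← hqdef, Nat.mul_comm q p] at h
      exact add_right_cancel h
    have hGroots : ∀ τ : ℂ, τ ≠ 0 → (Gc p q L₀).eval τ = 0 →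
        Polynomial.rootMultiplicity τ (Gc p q L₀) = 1 ∧ τ ^ p = 1 := by
      intro τ h1 h2
      exact mult_lemma_G (by omega) (by omega) _ _ hGne hHne hid τ h1 h2 (hroot τ h1 h2)
    have hHroots : ∀ τ : ℂ, τ ≠ 0 → (Hc p q L₀).eval τ = 0 →
        Polynomial.rootMultiplicity τ (Hc p q L₀) = 1 ∧ τ ^ q = 1 := by
      intro τ h1 h2
      have hGτ : (Gc p q L₀).eval τ ≠ 0 := fun hG0 => (hroot τ h1 hG0) h2
      exact mult_lemma_H (by omega) (by omega) _ _ hGne hHne hid τ h1 h2 hGτ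
    obtain ⟨eG, hg1, hg2⟩ := Gp_coeff_pair p q (by omega) L₀ hmemA
    have hg1' : (Gc p q L₀).coeff eG ≠ 0 := by
      rw [Gc, Polynomial.coeff_map, eq_natCast]
      intro h0; apply hg1; exact_mod_cast h0
    have hg2' : (Gc p q L₀).coeff (eG + q) ≠ 0 := by
      rw [Gc, Polynomial.coeff_map, eq_natCast]
      intro h0; apply hg2; exact_mod_cast h0
    have wgeG := width_ge (Gc p q L₀) eG q hg1' hg2'
    have wleG := width_le (Gc p q L₀) hGne p (by omega) hGroots
    obtain ⟨eH, hh1, hh2⟩ := Hp_coeff_pair p q (by omega) L₀ hmemB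
    have hh1' : (Hc p q L₀).coeff eH ≠ 0 := by
      rw [Hc, Polynomial.coeff_map, eq_natCast]
      intro h0; apply hh1; exact_mod_cast h0
    have hh2' : (Hc p q L₀).coeff (eH + p) ≠ 0 := by
      rw [Hc, Polynomial.coeff_map, eq_natCast]
      intro h0; apply hh2; exact_mod_cast h0
    have wgeH := width_ge (Hc p q L₀) eH p hh1' hh2'
    have wleH := width_le (Hc p q L₀) hHne q (by omega) hHroots
    have hpq : p = q := by omega
    rw [hpq] at hcop
    have hq1 : q = 1 := by rwa [Nat.Coprime, Nat.gcd_self] at hcop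
    omega
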